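/- The Poincaré constant of the multislice equals 1: for the function f : Ω_κ → ℝ defined by f(ω) = 1 if ω_1 = 1 and f(ω) = 0 otherwise, one has Var_κ(f) = 𝔈_κ(f, f) > 0; consequently, any τ ∈ ℝ satisfying Var_κ(g) ≤ τ·𝔈_κ(g,g) for all g : Ω_κ → ℝ satisfies τ ≥ 1. -/

import Mathlib

open Finset

namespace Multislice

/-- The multislice `Ω_κ`: sequences of length `n` with values in `Fin L`
in which color `ℓ` appears exactly `κ ℓ` times. -/
def slice (L n : ℕ) (κ : Fin L → ℕ) : Finset (Fin n → Fin L) :=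
  Finset.univ.filter fun ω => ∀ ℓ, (Finset.univ.filter fun i => ω i = ℓ).card = κ ℓ

/-- Average of `f` with respect to the uniform distribution on `Ω`. -/
noncomputable def expect {L n : ℕ} (Ω : Finset (Fin n → Fin L))
    (f : (Fin n → Fin L) → ℝ) : ℝ :=
  (∑ ω ∈ Ω, f ω) / Ω.card

/-- Discrete gradient `(∇^{ij} f)(ω) = f(ω^{ij}) - f(ω)`. -/
noncomputable def grad {L n : ℕ} (i j : Fin n) (f : (Fin n → Fin L) → ℝ)
    (ω : Fin n → Fin L) : ℝ :=
  f (ω ∘ Equiv.swap i j) - f ω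

/-- The Dirichlet form `𝔈_κ(f,g) = (1/(2n)) Σ_{i<j} E[(∇^{ij}f)(∇^{ij}g)]`. -/
noncomputable def dirichlet {L n : ℕ} (Ω : Finset (Fin n → Fin L))
    (f g : (Fin n → Fin L) → ℝ) : ℝ :=
  (1 / (2 * (n : ℝ))) *
    ∑ p ∈ Finset.univ.filter (fun p : Fin n × Fin n => p.1 < p.2),
      expect Ω fun ω => grad p.1 p.2 f ω * grad p.1 p.2 g ω

/-- The weighted Dirichlet form `𝔈^G_κ(f,g) = (1/2) Σ_{i<j} G_{ij} E[(∇^{ij}f)(∇^{ij}g)]`. -/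
noncomputable def wDirichlet {L n : ℕ} (G : Fin n → Fin n → ℝ)
    (Ω : Finset (Fin n → Fin L)) (f g : (Fin n → Fin L) → ℝ) : ℝ :=
  (1 / 2) *
    ∑ p ∈ Finset.univ.filter (fun p : Fin n × Fin n => p.1 < p.2),
      G p.1 p.2 * expect Ω fun ω => grad p.1 p.2 f ω * grad p.1 p.2 g ω

/-- Entropy `Ent(f) = E[f log f] - E[f] log E[f]` (note `Real.log 0 = 0`). -/
noncomputable def entropy {L n : ℕ} (Ω : Finset (Fin n → Fin L))
    (f : (Fin n → Fin L) → ℝ) : ℝ :=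
  expect Ω (fun ω => f ω * Real.log (f ω)) - expect Ω f * Real.log (expect Ω f)

/-- Variance `Var(f) = E[f²] - (E[f])²`. -/
noncomputable def variance {L n : ℕ} (Ω : Finset (Fin n → Fin L))
    (f : (Fin n → Fin L) → ℝ) : ℝ :=
  expect Ω (fun ω => f ω ^ 2) - (expect Ω f) ^ 2

/-- The edge boundary `∂A` of `A ⊆ Ω`: edges (recorded as pairs with first endpoint
in `A` and second endpoint in `Ω \ A`) between `A` and its complement, where two
states are adjacent when they differ in exactly two coordinates. -/
def edgeBoundary {L n : ℕ} (Ω A : Finset (Fin n → Fin L)) :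
    Finset ((Fin n → Fin L) × (Fin n → Fin L)) :=
  (A ×ˢ (Ω \ A)).filter fun p => (Finset.univ.filter fun i => p.1 i ≠ p.2 i).card = 2

/-- The `ℓ`-colored region `ξ_ℓ(ω) = {i : ω i = ℓ}`. -/
def xi {L n : ℕ} (ℓ : Fin L) (ω : Fin n → Fin L) : Finset (Fin n) :=
  Finset.univ.filter fun i => ω i = ℓ

/-- The parameter `κ^{∖ℓ}` obtained from `κ` by removing the `ℓ`-th entry. -/
def removeIdx {L : ℕ} (κ : Fin L → ℕ) (ℓ : Fin L) (m : Fin (L - 1)) : ℕ :=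
  if (m : ℕ) < (ℓ : ℕ) then κ ⟨m, by have := m.isLt; omega⟩
  else κ ⟨(m : ℕ) + 1, by have := m.isLt; omega⟩

section Aux
variable {L n : ℕ} {κ : Fin L → ℕ}

private lemma card_filter_get (l : List (Fin L)) (c : Fin L) :
    (Finset.univ.filter fun i : Fin l.length => l.get i = c).card = l.count c := by
  induction l with
  | nil => simp
  | cons a l ih =>
    rw [Finset.card_filter]
    show (∑ i : Fin (l.length + 1), if (a :: l).get i = c then 1 else 0) = _
    rw [Fin.sum_univ_succ]
    have hfe : (Finset.univ.filter fun i : Fin l.length => (a :: l).get i.succ = c)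
        = Finset.univ.filter fun i : Fin l.length => l.get i = c := by
      ext i; simp [List.get_cons_succ']
    rw [← Finset.card_filter, hfe, ih, List.count_cons]
    simp only [List.get_cons_zero]
    simp only [beq_iff_eq]
    exact Nat.add_comm _ _

private lemma slice_nonempty (hn : n = ∑ ℓ, κ ℓ) : (slice L n κ).Nonempty := by
  classical
  set M : Multiset (Fin L) := ∑ ℓ, Multiset.replicate (κ ℓ) ℓ with hM
  have hcount : ∀ c, M.count c = κ c := by
    intro c
    rw [hM, Multiset.count_sum']
    simp [Multiset.count_replicate]
  have hlen : M.toList.length = n := by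
    have hcs : ∀ s : Finset (Fin L),
        Multiset.card (∑ ℓ ∈ s, Multiset.replicate (κ ℓ) ℓ) = ∑ ℓ ∈ s, κ ℓ := by
      intro s
      induction s using Finset.cons_induction with
      | empty => simp
      | cons a s ha ih => simp [Finset.sum_cons, ih]
    rw [Multiset.length_toList, hM, hn, hcs]
  refine ⟨fun i => M.toList.get (Fin.cast hlen.symm i), ?_⟩
  simp only [slice, Finset.mem_filter, Finset.mem_univ, true_and]
  intro ℓ
  have : (Finset.univ.filter fun i : Fin n => M.toList.get (Fin.cast hlen.symm i) = ℓ).card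
      = (Finset.univ.filter fun i : Fin M.toList.length => M.toList.get i = ℓ).card := by
    apply Finset.card_nbij' (Fin.cast hlen.symm) (Fin.cast hlen) <;> intro x hx <;> simp_all
  rw [this, card_filter_get, ← hcount ℓ, ← Multiset.coe_toList M, Multiset.coe_count,
    Multiset.coe_toList]

private lemma comp_perm_mem_slice {ω : Fin n → Fin L} (hω : ω ∈ slice L n κ)
    (π : Equiv.Perm (Fin n)) : ω ∘ π ∈ slice L n κ := by
  simp only [slice, Finset.mem_filter, Finset.mem_univ, true_and] at hω ⊢
  intro ℓ
  rw [← hω ℓ]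
  apply Finset.card_nbij' (fun i => π i) (fun i => π.symm i)
  · intro x hx
    simp only [Finset.mem_filter, Finset.mem_univ, true_and, Function.comp_apply, Finset.coe_filter, Set.mem_setOf_eq] at hx ⊢
    exact hx
  · intro x hx
    simp only [Finset.mem_filter, Finset.mem_univ, true_and, Function.comp_apply] at hx ⊢
    simpa using hx
  · intro x _; simp
  · intro x _; simp

private lemma count_coord (i i' : Fin n) (c : Fin L) :
    ((slice L n κ).filter fun ω => ω i = c).card
      = ((slice L n κ).filter fun ω => ω i' = c).card := by
  classical
  apply Finset.card_nbij' (fun ω => ω ∘ Equiv.swap i i') (fun ω => ω ∘ Equiv.swap i i')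
  · intro ω hω
    rw [Finset.mem_coe, Finset.mem_filter] at hω ⊢
    refine ⟨comp_perm_mem_slice hω.1 _, ?_⟩
    simpa [Equiv.swap_apply_right] using hω.2
  · intro ω hω
    rw [Finset.mem_coe, Finset.mem_filter] at hω ⊢
    refine ⟨comp_perm_mem_slice hω.1 _, ?_⟩
    simpa [Equiv.swap_apply_left] using hω.2
  · intro ω _; funext k; simp
  · intro ω _; funext k; simp

private lemma n_mul_count (c : Fin L) (i0 : Fin n) :
    n * ((slice L n κ).filter fun ω => ω i0 = c).card = κ c * (slice L n κ).card := by
  classical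
  have key : ∑ i : Fin n, ((slice L n κ).filter fun ω => ω i = c).card
      = κ c * (slice L n κ).card := by
    calc ∑ i : Fin n, ((slice L n κ).filter fun ω => ω i = c).card
        = ∑ i : Fin n, ∑ ω ∈ slice L n κ, if ω i = c then 1 else 0 :=
          Finset.sum_congr rfl fun i _ => Finset.card_filter _ _
      _ = ∑ ω ∈ slice L n κ, ∑ i : Fin n, if ω i = c then 1 else 0 := Finset.sum_comm
      _ = ∑ _ω ∈ slice L n κ, κ c := by
          refine Finset.sum_congr rfl fun ω hω => ?_
          rw [← Finset.card_filter]
          simp only [slice, Finset.mem_filter, Finset.mem_univ, true_and] at hω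
          exact hω c
      _ = κ c * (slice L n κ).card := by rw [Finset.sum_const, smul_eq_mul, mul_comm]
  rw [← key, Finset.sum_congr rfl fun i _ => count_coord i i0 c]
  simp [mul_comm]

private lemma sum_pair_counts (c : Fin L) (hc : 0 < κ c) (i0 : Fin n) :
    (∑ j ∈ Finset.univ.erase i0,
      ((slice L n κ).filter fun ω => ω i0 = c ∧ ω j = c).card)
      + ((slice L n κ).filter fun ω => ω i0 = c).card
    = κ c * ((slice L n κ).filter fun ω => ω i0 = c).card := by
  classical
  have h1 : ∀ j : Fin n, ((slice L n κ).filter fun ω => ω i0 = c ∧ ω j = c).card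
      = ∑ ω ∈ (slice L n κ).filter (fun ω => ω i0 = c), if ω j = c then 1 else 0 := by
    intro j
    rw [← Finset.card_filter, Finset.filter_filter]
  have h2 : ∑ j ∈ Finset.univ.erase i0,
      ((slice L n κ).filter fun ω => ω i0 = c ∧ ω j = c).card
      = ∑ ω ∈ (slice L n κ).filter (fun ω => ω i0 = c), (κ c - 1) := by
    rw [Finset.sum_congr rfl fun j _ => h1 j, Finset.sum_comm]
    refine Finset.sum_congr rfl fun ω hω => ?_
    rw [← Finset.card_filter, Finset.filter_erase, Finset.card_erase_of_mem]
    · have hs := (Finset.mem_filter.mp hω).1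
      simp only [slice, Finset.mem_filter, Finset.mem_univ, true_and] at hs
      rw [hs c]
    · exact Finset.mem_filter.mpr ⟨Finset.mem_univ _, (Finset.mem_filter.mp hω).2⟩
  rw [h2, Finset.sum_const, smul_eq_mul]
  obtain ⟨m, hm⟩ := Nat.exists_eq_succ_of_ne_zero (Nat.pos_iff_ne_zero.mp hc)
  rw [hm, Nat.succ_sub_one, Nat.succ_mul]
  ring

end Aux

private lemma alg1 (N Sr A K2 : ℝ) (hN : N ≠ 0) (hS : Sr ≠ 0) :
    1 / (2 * N) * (((N - 1) * (2 * A) - 2 * (K2 * A - A)) / Sr) = (N - K2) * A / (N * Sr) := by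
  field_simp
  ring

private lemma alg2 (N Sr A K2 : ℝ) (hS : 0 < Sr) (hN : 0 < N) (h : N * A = K2 * Sr) :
    A / Sr - (A / Sr) ^ 2 = (N - K2) * A / (N * Sr) := by
  have hS' : Sr ≠ 0 := ne_of_gt hS
  have hN' : N ≠ 0 := ne_of_gt hN
  field_simp
  linear_combination (-A) * h

private lemma alg3 (D τ : ℝ) (hD : 0 < D) (h : D ≤ τ * D) : 1 ≤ τ := by
  nlinarith

/-- the Poincaré constant of the multislice equals 1, as witnessed by
the indicator of `{ω : ω_1 = 1}`. -/
theorem multislice_poincare_sharp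
    (L : ℕ) (hL : 2 ≤ L) (κ : Fin L → ℕ) (hκ : ∀ ℓ, 0 < κ ℓ)
    (n : ℕ) (hn : n = ∑ ℓ, κ ℓ) (hn0 : 0 < n) :
    (variance (slice L n κ)
        (fun ω => if ω ⟨0, hn0⟩ = (⟨0, by omega⟩ : Fin L) then (1 : ℝ) else 0) =
      dirichlet (slice L n κ)
        (fun ω => if ω ⟨0, hn0⟩ = (⟨0, by omega⟩ : Fin L) then (1 : ℝ) else 0)
        (fun ω => if ω ⟨0, hn0⟩ = (⟨0, by omega⟩ : Fin L) then (1 : ℝ) else 0)) ∧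
    (0 < dirichlet (slice L n κ)
        (fun ω => if ω ⟨0, hn0⟩ = (⟨0, by omega⟩ : Fin L) then (1 : ℝ) else 0)
        (fun ω => if ω ⟨0, hn0⟩ = (⟨0, by omega⟩ : Fin L) then (1 : ℝ) else 0)) ∧
    ∀ τ : ℝ, (∀ g : (Fin n → Fin L) → ℝ,
        variance (slice L n κ) g ≤ τ * dirichlet (slice L n κ) g g) → 1 ≤ τ := by
  classical
  have hL0 : 0 < L := by omega
  set Ω := slice L n κ with hΩ
  set i0 : Fin n := ⟨0, hn0⟩ with hi0
  set c0 : Fin L := ⟨0, hL0⟩ with hc0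
  set f : (Fin n → Fin L) → ℝ := fun ω => if ω i0 = c0 then (1:ℝ) else 0 with hfdef
  suffices h : (variance Ω f = dirichlet Ω f f) ∧ (0 < dirichlet Ω f f) ∧
      ∀ τ : ℝ, (∀ g : (Fin n → Fin L) → ℝ,
        variance Ω g ≤ τ * dirichlet Ω g g) → 1 ≤ τ by
    exact h
  -- basic counts
  set a : ℕ := (Ω.filter fun ω => ω i0 = c0).card with hadef
  set S : ℕ := Ω.card with hSdef
  set K : ℕ := κ c0 with hKdef
  set b : Fin n → ℕ := fun j => (Ω.filter fun ω => ω i0 = c0 ∧ ω j = c0).card with hbdef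
  set T : ℕ := ∑ j ∈ Finset.univ.erase i0, b j with hTdef
  have hS : 0 < S := Finset.card_pos.mpr (slice_nonempty hn)
  have hna : n * a = K * S := n_mul_count c0 i0
  have hTa : T + a = K * a := sum_pair_counts c0 (hκ c0) i0
  have hK : 0 < K := hκ c0
  have hKn : K < n := by
    set c1 : Fin L := ⟨1, lt_of_lt_of_le one_lt_two hL⟩ with hc1
    have hne : c1 ≠ c0 := by simp [hc1, hc0, Fin.ext_iff]
    have h1 : κ c0 + ∑ ℓ ∈ Finset.univ.erase c0, κ ℓ = ∑ ℓ, κ ℓ :=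
      Finset.add_sum_erase _ κ (Finset.mem_univ c0)
    have h2 : κ c1 ≤ ∑ ℓ ∈ Finset.univ.erase c0, κ ℓ :=
      Finset.single_le_sum (fun i _ => Nat.zero_le _)
        (Finset.mem_erase.mpr ⟨hne, Finset.mem_univ _⟩)
    calc K < K + κ c1 := Nat.lt_add_of_pos_right (hκ c1)
      _ ≤ K + ∑ ℓ ∈ Finset.univ.erase c0, κ ℓ := Nat.add_le_add_left h2 K
      _ = ∑ ℓ, κ ℓ := h1
      _ = n := hn.symm
  have ha : 0 < a := by
    rcases Nat.eq_zero_or_pos a with h | h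
    · exfalso
      rw [h, Nat.mul_zero] at hna
      exact absurd hna.symm (Nat.ne_of_gt (Nat.mul_pos hK hS))
    · exact h
  -- real versions
  have hS' : (0:ℝ) < S := by exact_mod_cast hS
  have hn' : (0:ℝ) < n := by exact_mod_cast hn0
  have ha' : (0:ℝ) < a := by exact_mod_cast ha
  have hna' : (n:ℝ) * a = K * S := by exact_mod_cast hna
  have hTa' : (T:ℝ) + a = K * a := by exact_mod_cast hTa
  have hKn' : (K:ℝ) < n := by exact_mod_cast hKn
  -- expectations
  have hsum_f : ∑ ω ∈ Ω, f ω = (a:ℝ) := by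
    rw [hfdef, Finset.sum_boole, hadef]
  have hEf : expect Ω f = (a:ℝ) / S := by rw [expect, hsum_f, hSdef]
  have hf2 : ∀ ω, f ω ^ 2 = f ω := by
    intro ω
    rw [hfdef]
    dsimp only
    split_ifs <;> norm_num
  have hEf2 : expect Ω (fun ω => f ω ^ 2) = (a:ℝ) / S := by
    rw [expect, Finset.sum_congr rfl fun ω _ => hf2 ω, hsum_f, hSdef]
  have hV : variance Ω f = (a:ℝ)/S - ((a:ℝ)/S)^2 := by
    rw [variance, hEf2, hEf]
  -- Dirichlet form
  set E : Fin n × Fin n → ℝ :=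
    fun p => expect Ω fun ω => grad p.1 p.2 f ω * grad p.1 p.2 f ω with hEdef
  have hP : ∑ p ∈ Finset.univ.filter (fun p : Fin n × Fin n => p.1 < p.2), E p
      = ∑ j ∈ Finset.univ.erase i0, E (i0, j) := by
    have hinj : ∀ x ∈ Finset.univ.erase i0, ∀ y ∈ Finset.univ.erase i0,
        (fun j => ((i0, j) : Fin n × Fin n)) x = (fun j => (i0, j)) y → x = y := by
      intro x _ y _ h
      exact congrArg Prod.snd h
    rw [show ∑ j ∈ Finset.univ.erase i0, E (i0, j)
        = ∑ p ∈ (Finset.univ.erase i0).image (fun j => ((i0, j) : Fin n × Fin n)), E p from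
      (Finset.sum_image hinj).symm]
    refine (Finset.sum_subset ?_ ?_).symm
    · intro p hp
      simp only [Finset.mem_image, Finset.mem_erase, Finset.mem_univ, and_true,
        true_and] at hp
      obtain ⟨j, hj, rfl⟩ := hp
      simp only [Finset.mem_filter, Finset.mem_univ, true_and]
      have hjv : (j:ℕ) ≠ 0 := fun h => hj (by rw [hi0]; exact Fin.ext h)
      show i0 < j
      rw [Fin.lt_def]
      exact Nat.pos_of_ne_zero hjv
    · intro p hp hnotin
      simp only [Finset.mem_filter, Finset.mem_univ, true_and] at hp
      have h1 : p.1 ≠ i0 := by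
        intro h1
        apply hnotin
        have h2 : p.2 ≠ i0 := by
          intro h2
          rw [h1, h2] at hp
          exact lt_irrefl _ hp
        refine Finset.mem_image.mpr ⟨p.2, Finset.mem_erase.mpr ⟨h2, Finset.mem_univ _⟩, ?_⟩
        rw [← h1]
      have h2 : p.2 ≠ i0 := by
        intro h2
        have hlt := hp
        rw [Fin.lt_def, h2] at hlt
        exact absurd hlt (by rw [show ((i0 : Fin n) : ℕ) = 0 from rfl]; exact Nat.not_lt_zero _)
      have hg : ∀ ω : Fin n → Fin L, grad p.1 p.2 f ω = 0 := by
        intro ω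
        have hsw : (ω ∘ Equiv.swap p.1 p.2) i0 = ω i0 := by
          simp only [Function.comp_apply]
          rw [Equiv.swap_apply_of_ne_of_ne (Ne.symm h1) (Ne.symm h2)]
        rw [grad, hfdef]
        dsimp only
        rw [hsw, sub_self]
      rw [hEdef]
      dsimp only
      rw [expect, Finset.sum_congr rfl fun ω _ => by rw [hg ω, mul_zero]]
      simp
  have hEj : ∀ j ∈ Finset.univ.erase i0,
      E (i0, j) = ((a:ℝ) + a - 2 * (b j : ℝ)) / S := by
    intro j hj
    have hpt : ∀ ω : Fin n → Fin L, grad i0 j f ω * grad i0 j f ω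
        = (if ω i0 = c0 then (1:ℝ) else 0) + (if ω j = c0 then (1:ℝ) else 0)
          - 2 * (if ω i0 = c0 ∧ ω j = c0 then (1:ℝ) else 0) := by
      intro ω
      have hsw : (ω ∘ Equiv.swap i0 j) i0 = ω j := by
        simp [Equiv.swap_apply_left]
      rw [grad, hfdef]
      dsimp only
      rw [hsw]
      by_cases hx : ω i0 = c0 <;> by_cases hy : ω j = c0 <;>
        simp [hx, hy] <;> ring
    rw [hEdef]
    dsimp only
    rw [expect, Finset.sum_congr rfl fun ω _ => hpt ω]
    rw [Finset.sum_sub_distrib, Finset.sum_add_distrib, ← Finset.mul_sum,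
      Finset.sum_boole, Finset.sum_boole, Finset.sum_boole]
    rw [count_coord (κ := κ) j i0 c0]
  have hcard : ((Finset.univ.erase i0).card : ℝ) = (n:ℝ) - 1 := by
    rw [Finset.card_erase_of_mem (Finset.mem_univ _), Finset.card_univ, Fintype.card_fin]
    have : 1 ≤ n := hn0
    push_cast [Nat.cast_sub this]
    ring
  have hDsum : ∑ j ∈ Finset.univ.erase i0, E (i0, j)
      = (((n:ℝ) - 1) * (2 * a) - 2 * T) / S := by
    rw [Finset.sum_congr rfl hEj, ← Finset.sum_div]
    congr 1
    rw [Finset.sum_sub_distrib, Finset.sum_const, ← Finset.mul_sum]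
    rw [nsmul_eq_mul, hcard]
    have : ∑ j ∈ Finset.univ.erase i0, (b j : ℝ) = (T:ℝ) := by
      rw [hTdef]
      push_cast
      ring
    rw [this]
    ring
  have hD : dirichlet Ω f f = ((n:ℝ) - K) * a / ((n:ℝ) * S) := by
    have : dirichlet Ω f f = (1 / (2 * (n : ℝ))) *
        ∑ p ∈ Finset.univ.filter (fun p : Fin n × Fin n => p.1 < p.2), E p := rfl
    rw [this, hP, hDsum]
    have hT' : (T:ℝ) = K * a - a := by linarith
    rw [hT']
    exact alg1 _ _ _ _ (ne_of_gt hn') (ne_of_gt hS')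
  have hVD : variance Ω f = dirichlet Ω f f := by
    rw [hV, hD]
    exact alg2 _ _ _ _ hS' hn' hna'
  have hDpos : 0 < dirichlet Ω f f := by
    rw [hD]
    apply div_pos
    · apply mul_pos _ ha'
      linarith
    · exact mul_pos hn' hS'
  refine ⟨hVD, hDpos, ?_⟩
  intro τ hτ
  have h := hτ f
  rw [hVD] at h
  exact alg3 _ _ hDpos h

end Multislice
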